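/- Let X, Y be locally Lipschitz vector fields on ℝⁿ. For each x, the set-valued Lie bracket [X,Y]_set(x) := co{ v = lim_{x_k → x} [X,Y](x_k) : x_k ∈ Diff(X) ∩ Diff(Y) } is a nonempty, compact, convex subset of ℝⁿ, and it is antisymmetric: [Y,X]_set(x) = −[X,Y]_set(x). -/

import Mathlib

open Set Filter Topology

variable {n : ℕ}

/-- The pointwise Lie bracket `[X,Y] = DY·X − DX·Y`. -/
noncomputable def lieBracket (X Y : (Fin n → ℝ) → (Fin n → ℝ)) :
    (Fin n → ℝ) → (Fin n → ℝ) :=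
  fun x => fderiv ℝ Y x (X x) - fderiv ℝ X x (Y x)

/-- The set-valued Lie bracket of two locally Lipschitz vector fields. -/
noncomputable def setLieBracket (X Y : (Fin n → ℝ) → (Fin n → ℝ)) (x : Fin n → ℝ) :
    Set (Fin n → ℝ) :=
  convexHull ℝ {v | ∃ u : ℕ → (Fin n → ℝ),
    (∀ k, DifferentiableAt ℝ X (u k) ∧ DifferentiableAt ℝ Y (u k)) ∧
    Tendsto u atTop (𝓝 x) ∧
    Tendsto (fun k => lieBracket X Y (u k)) atTop (𝓝 v)}

/-- The underlying (pre-hull) set of limit points. -/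
def limSet (X Y : (Fin n → ℝ) → (Fin n → ℝ)) (x : Fin n → ℝ) : Set (Fin n → ℝ) :=
  {v | ∃ u : ℕ → (Fin n → ℝ),
    (∀ k, DifferentiableAt ℝ X (u k) ∧ DifferentiableAt ℝ Y (u k)) ∧
    Tendsto u atTop (𝓝 x) ∧
    Tendsto (fun k => lieBracket X Y (u k)) atTop (𝓝 v)}

lemma setLieBracket_eq (X Y : (Fin n → ℝ) → (Fin n → ℝ)) (x : Fin n → ℝ) :
    setLieBracket X Y x = convexHull ℝ (limSet X Y x) := rfl

lemma lieBracket_swap (X Y : (Fin n → ℝ) → (Fin n → ℝ)) (z : Fin n → ℝ) :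
    lieBracket Y X z = -(lieBracket X Y z) := by
  simp [lieBracket, neg_sub]

lemma limSet_swap (X Y : (Fin n → ℝ) → (Fin n → ℝ)) (x : Fin n → ℝ) :
    limSet Y X x = -(limSet X Y x) := by
  ext v
  constructor
  · rintro ⟨u, hd, hux, huv⟩
    refine ⟨u, fun k => ⟨(hd k).2, (hd k).1⟩, hux, ?_⟩
    have : Tendsto (fun k => -(lieBracket Y X (u k))) atTop (𝓝 (-v)) := huv.neg
    simpa [lieBracket_swap X Y, neg_neg] using this
  · rintro ⟨u, hd, hux, huv⟩
    refine ⟨u, fun k => ⟨(hd k).2, (hd k).1⟩, hux, ?_⟩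
    have : Tendsto (fun k => -(lieBracket X Y (u k))) atTop (𝓝 (-(-v))) := huv.neg
    simpa [neg_neg, ← lieBracket_swap X Y] using this

lemma limSet_isClosed (X Y : (Fin n → ℝ) → (Fin n → ℝ)) (x : Fin n → ℝ) :
    IsClosed (limSet X Y x) := by
  rw [← isSeqClosed_iff_isClosed]
  intro w v hw hwv
  choose u hd hux huv using hw
  -- diagonal extraction
  have key : ∀ m : ℕ, ∃ z : Fin n → ℝ,
      (DifferentiableAt ℝ X z ∧ DifferentiableAt ℝ Y z) ∧
      dist z x < 1 / (m + 1) ∧ dist (lieBracket X Y z) (w m) < 1 / (m + 1) := by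
    intro m
    have hpos : (0 : ℝ) < 1 / (m + 1) := by positivity
    have h1 := (Metric.tendsto_nhds.1 (hux m)) _ hpos
    have h2 := (Metric.tendsto_nhds.1 (huv m)) _ hpos
    obtain ⟨k, hk1, hk2⟩ := (h1.and h2).exists
    exact ⟨u m k, hd m k, hk1, hk2⟩
  choose z hz hz1 hz2 using key
  refine ⟨z, hz, ?_, ?_⟩
  · rw [tendsto_iff_dist_tendsto_zero]
    refine squeeze_zero (fun m => dist_nonneg) (fun m => (hz1 m).le) ?_
    exact tendsto_one_div_add_atTop_nhds_zero_nat
  · rw [tendsto_iff_dist_tendsto_zero]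
    have hle : ∀ m, dist (lieBracket X Y (z m)) v ≤ 1 / (m + 1) + dist (w m) v := by
      intro m
      calc dist (lieBracket X Y (z m)) v ≤ dist (lieBracket X Y (z m)) (w m) + dist (w m) v :=
            dist_triangle _ _ _
        _ ≤ 1 / (m + 1) + dist (w m) v := by linarith [(hz2 m).le]
    refine squeeze_zero (fun m => dist_nonneg) hle ?_
    have h1 : Tendsto (fun m : ℕ => 1 / ((m : ℝ) + 1)) atTop (𝓝 0) :=
      tendsto_one_div_add_atTop_nhds_zero_nat
    have h2 : Tendsto (fun m => dist (w m) v) atTop (𝓝 0) :=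
      tendsto_iff_dist_tendsto_zero.1 hwv
    simpa using h1.add h2


/-- In `ℝⁿ`, the convex hull of a compact set is compact (via Carathéodory). -/
lemma isCompact_convexHull_of_isCompact {s : Set (Fin n → ℝ)} (hs : IsCompact s) :
    IsCompact (convexHull ℝ s) := by
  rcases s.eq_empty_or_nonempty with rfl | ⟨s₀, hs₀⟩
  · simpa [convexHull_empty] using isCompact_empty
  · set f : (Fin (n + 1) → ℝ) × (Fin (n + 1) → Fin n → ℝ) → (Fin n → ℝ) :=
      fun q => ∑ j, q.1 j • q.2 j with hf
    have hfc : Continuous f := by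
      apply continuous_finset_sum
      intro j _
      exact ((continuous_apply j).comp continuous_fst).smul
        ((continuous_apply j).comp continuous_snd)
    have hT : IsCompact ((stdSimplex ℝ (Fin (n + 1))) ×ˢ (Set.univ.pi fun _ : Fin (n + 1) => s)) :=
      (isCompact_stdSimplex _ _).prod (isCompact_univ_pi fun _ => hs)
    have himg : f '' ((stdSimplex ℝ (Fin (n + 1))) ×ˢ (Set.univ.pi fun _ : Fin (n + 1) => s))
        = convexHull ℝ s := by
      apply Set.Subset.antisymm
      · rintro _ ⟨⟨w, p⟩, ⟨hw, hp⟩, rfl⟩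
        exact (convex_convexHull ℝ s).sum_mem (fun j _ => hw.1 j) hw.2
          (fun j _ => subset_convexHull ℝ s (hp j (Set.mem_univ j)))
      · intro v hv
        obtain ⟨ι, hι, z, w, hzs, hai, hwpos, hwsum, hvx⟩ :=
          eq_pos_convex_span_of_mem_convexHull hv
        have hcard : Fintype.card ι ≤ n + 1 := by
          have h1 := hai.card_le_finrank_succ
          have h2 : Module.finrank ℝ (vectorSpan ℝ (Set.range z)) ≤ n := by
            have h3 := Submodule.finrank_le (vectorSpan ℝ (Set.range z))
            simpa [Module.finrank_fin_fun] using h3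
          omega
        obtain ⟨e⟩ : Nonempty (ι ↪ Fin (n + 1)) := by
          apply Function.Embedding.nonempty_of_card_le
          simpa using hcard
        set w' : Fin (n + 1) → ℝ := Function.extend e w 0 with hw'
        set z' : Fin (n + 1) → (Fin n → ℝ) := Function.extend e z (fun _ => s₀) with hz'
        have hzero : ∀ j : Fin (n + 1), j ∉ Finset.univ.image e → w' j = 0 := by
          intro j hj
          rw [hw', Function.extend_def]
          split_ifs with h
          · exact absurd (Finset.mem_image.2 ⟨Classical.choose h, Finset.mem_univ _,
              Classical.choose_spec h⟩) hj
          · rfl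
        have hInj : ∀ a ∈ Finset.univ, ∀ b ∈ Finset.univ, e a = e b → a = b :=
          fun a _ b _ h => e.injective h
        have hws : ∑ j, w' j = 1 := by
          rw [← Finset.sum_subset (Finset.subset_univ (Finset.univ.image e)) fun j _ hj =>
            hzero j hj, Finset.sum_image hInj]
          simp only [hw', e.injective.extend_apply]
          exact hwsum
        refine ⟨(w', z'), ⟨⟨fun j => ?_, hws⟩, fun j _ => ?_⟩, ?_⟩
        · show 0 ≤ w' j
          rw [hw', Function.extend_def]
          split_ifs with h
          · exact (hwpos _).le
          · exact le_refl _
        · show z' j ∈ s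
          rw [hz', Function.extend_def]
          split_ifs with h
          · exact hzs ⟨Classical.choose h, rfl⟩
          · exact hs₀
        · show ∑ j, w' j • z' j = v
          rw [← Finset.sum_subset (Finset.subset_univ (Finset.univ.image e))
            (fun j _ hj => by rw [hzero j hj, zero_smul]), Finset.sum_image hInj]
          simp only [hw', hz', e.injective.extend_apply]
          exact hvx
    rw [← himg]
    exact hT.image hfc

set_option maxHeartbeats 1000000 in
theorem stmt_11 (X Y : (Fin n → ℝ) → (Fin n → ℝ))
    (hX : LocallyLipschitz X) (hY : LocallyLipschitz Y) (x : Fin n → ℝ) :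
    (setLieBracket X Y x).Nonempty ∧ IsCompact (setLieBracket X Y x) ∧
    Convex ℝ (setLieBracket X Y x) ∧
    setLieBracket Y X x = -setLieBracket X Y x := by
  obtain ⟨K₁, t₁, ht₁, hL₁⟩ := hX x
  obtain ⟨K₂, t₂, ht₂, hL₂⟩ := hY x
  obtain ⟨ε, εpos, hball⟩ := Metric.mem_nhds_iff.1 (inter_mem ht₁ ht₂)
  set B : Set (Fin n → ℝ) := Metric.ball x ε with hB
  have hBopen : IsOpen B := Metric.isOpen_ball
  have hLX : LipschitzOnWith K₁ X B := hL₁.mono (fun z hz => (hball hz).1)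
  have hLY : LipschitzOnWith K₂ Y B := hL₂.mono (fun z hz => (hball hz).2)
  have hxB : x ∈ B := Metric.mem_ball_self εpos
  -- norm bounds on B
  have hXbd : ∀ z ∈ B, ‖X z‖ ≤ ‖X x‖ + K₁ * ε := by
    intro z hz
    have := hLX.dist_le_mul z hz x hxB
    have hdz : dist z x ≤ ε := (Metric.mem_ball.1 hz).le
    have : dist (X z) (X x) ≤ K₁ * ε := by
      calc dist (X z) (X x) ≤ K₁ * dist z x := hLX.dist_le_mul z hz x hxB
        _ ≤ K₁ * ε := by nlinarith [K₁.coe_nonneg, dist_nonneg (x := z) (y := x)]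
    calc ‖X z‖ ≤ ‖X x‖ + dist (X z) (X x) := by
          rw [dist_eq_norm]
          have := norm_sub_norm_le (X z) (X x)
          linarith [norm_sub_norm_le (X z) (X x)]
      _ ≤ ‖X x‖ + K₁ * ε := by linarith
  have hYbd : ∀ z ∈ B, ‖Y z‖ ≤ ‖Y x‖ + K₂ * ε := by
    intro z hz
    have : dist (Y z) (Y x) ≤ K₂ * ε := by
      calc dist (Y z) (Y x) ≤ K₂ * dist z x := hLY.dist_le_mul z hz x hxB
        _ ≤ K₂ * ε := by nlinarith [K₂.coe_nonneg, dist_nonneg (x := z) (y := x),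
            (Metric.mem_ball.1 hz).le]
    calc ‖Y z‖ ≤ ‖Y x‖ + dist (Y z) (Y x) := by
          rw [dist_eq_norm]; linarith [norm_sub_norm_le (Y z) (Y x)]
      _ ≤ ‖Y x‖ + K₂ * ε := by linarith
  set C : ℝ := K₂ * (‖X x‖ + K₁ * ε) + K₁ * (‖Y x‖ + K₂ * ε) with hC
  have hbracket : ∀ z ∈ B, ‖lieBracket X Y z‖ ≤ C := by
    intro z hz
    have hzB : B ∈ 𝓝 z := hBopen.mem_nhds hz
    have hdX : ‖fderiv ℝ X z‖ ≤ K₁ := norm_fderiv_le_of_lipschitzOn ℝ hzB hLX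
    have hdY : ‖fderiv ℝ Y z‖ ≤ K₂ := norm_fderiv_le_of_lipschitzOn ℝ hzB hLY
    have h1 : ‖fderiv ℝ Y z (X z)‖ ≤ K₂ * (‖X x‖ + K₁ * ε) := by
      calc ‖fderiv ℝ Y z (X z)‖ ≤ ‖fderiv ℝ Y z‖ * ‖X z‖ := (fderiv ℝ Y z).le_opNorm _
        _ ≤ K₂ * (‖X x‖ + K₁ * ε) := by
            have h0 : (0:ℝ) ≤ ‖X z‖ := norm_nonneg _
            nlinarith [hXbd z hz, norm_nonneg (fderiv ℝ Y z), K₂.coe_nonneg,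
              norm_nonneg (X x), K₁.coe_nonneg, εpos.le]
    have h2 : ‖fderiv ℝ X z (Y z)‖ ≤ K₁ * (‖Y x‖ + K₂ * ε) := by
      calc ‖fderiv ℝ X z (Y z)‖ ≤ ‖fderiv ℝ X z‖ * ‖Y z‖ := (fderiv ℝ X z).le_opNorm _
        _ ≤ K₁ * (‖Y x‖ + K₂ * ε) := by
            nlinarith [hYbd z hz, norm_nonneg (fderiv ℝ X z), K₁.coe_nonneg,
              norm_nonneg (Y x), K₂.coe_nonneg, εpos.le, norm_nonneg (Y z)]
    calc ‖lieBracket X Y z‖ ≤ ‖fderiv ℝ Y z (X z)‖ + ‖fderiv ℝ X z (Y z)‖ :=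
          norm_sub_le _ _
      _ ≤ C := by rw [hC]; linarith
  -- limSet is contained in the closed ball of radius C
  have hsub : limSet X Y x ⊆ Metric.closedBall 0 C := by
    rintro v ⟨u, hd, hux, huv⟩
    have hev : ∀ᶠ k in atTop, u k ∈ B := hux (hBopen.mem_nhds hxB)
    have hnorm : Tendsto (fun k => ‖lieBracket X Y (u k)‖) atTop (𝓝 ‖v‖) := huv.norm
    have : ‖v‖ ≤ C := le_of_tendsto hnorm (hev.mono fun k hk => hbracket _ hk)
    simpa [Metric.mem_closedBall, dist_zero_right] using this
  -- nonempty
  have hne : (limSet X Y x).Nonempty := by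
    have key : ∀ k : ℕ, ∃ z : Fin n → ℝ, dist z x < 1 / (k + 1) ∧
        DifferentiableAt ℝ X z ∧ DifferentiableAt ℝ Y z := by
      intro k
      set r : ℝ := min ε (1 / (k + 1)) with hr
      have hrpos : 0 < r := lt_min εpos (by positivity)
      have hae : ∀ᵐ z ∂(MeasureTheory.volume), z ∈ B →
          (DifferentiableWithinAt ℝ X B z ∧ DifferentiableWithinAt ℝ Y B z) := by
        filter_upwards [hLX.ae_differentiableWithinAt_of_mem (μ := MeasureTheory.volume),
          hLY.ae_differentiableWithinAt_of_mem (μ := MeasureTheory.volume)] with z h1 h2 hz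
        exact ⟨h1 hz, h2 hz⟩
      have hpos : 0 < MeasureTheory.volume (Metric.ball x r) := Metric.measure_ball_pos _ _ hrpos
      have : (Metric.ball x r ∩ {z | z ∈ B →
          (DifferentiableWithinAt ℝ X B z ∧ DifferentiableWithinAt ℝ Y B z)}).Nonempty := by
        by_contra hcon
        rw [not_nonempty_iff_eq_empty] at hcon
        have hsub' : Metric.ball x r ⊆ {z | z ∈ B →
            (DifferentiableWithinAt ℝ X B z ∧ DifferentiableWithinAt ℝ Y B z)}ᶜ := by
          intro z hz hmem
          exact (Set.eq_empty_iff_forall_notMem.1 hcon z) (Set.mem_inter hz hmem)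
        have h0 : MeasureTheory.volume {z | z ∈ B →
            (DifferentiableWithinAt ℝ X B z ∧ DifferentiableWithinAt ℝ Y B z)}ᶜ = 0 := by
          rw [Set.compl_setOf]
          exact MeasureTheory.ae_iff.1 hae
        have := MeasureTheory.measure_mono_null hsub' h0
        exact hpos.ne' this
      obtain ⟨z, hz1, hz2⟩ := this
      have hzB : z ∈ B := Metric.ball_subset_ball (min_le_left _ _) hz1
      have hzn : B ∈ 𝓝 z := hBopen.mem_nhds hzB
      obtain ⟨hdx, hdy⟩ := hz2 hzB
      refine ⟨z, lt_of_lt_of_le (Metric.mem_ball.1 hz1) (min_le_right _ _),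
        hdx.differentiableAt hzn, hdy.differentiableAt hzn⟩
    choose u hu1 hu2 hu3 using key
    have hux : Tendsto u atTop (𝓝 x) := by
      rw [tendsto_iff_dist_tendsto_zero]
      refine squeeze_zero (fun k => dist_nonneg) (fun k => (hu1 k).le) ?_
      exact tendsto_one_div_add_atTop_nhds_zero_nat
    have huB : ∀ᶠ k in atTop, u k ∈ B := hux (hBopen.mem_nhds hxB)
    obtain ⟨N, hN⟩ := eventually_atTop.1 huB
    have hbdd : ∀ k, lieBracket X Y (u (N + k)) ∈ Metric.closedBall (0 : Fin n → ℝ) C := by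
      intro k
      have : u (N + k) ∈ B := hN _ (Nat.le_add_right _ _)
      simpa [Metric.mem_closedBall, dist_zero_right] using hbracket _ this
    obtain ⟨v, -, φ, hφ, hvlim⟩ :=
      tendsto_subseq_of_bounded Metric.isBounded_closedBall hbdd
    refine ⟨v, fun k => u (N + φ k), fun k => ⟨hu2 _, hu3 _⟩, ?_, hvlim⟩
    have : Tendsto (fun k => N + φ k) atTop atTop :=
      tendsto_atTop_mono (fun k => Nat.le_add_left (φ k) N) hφ.tendsto_atTop
    exact hux.comp this
  -- compactness of limSet
  have hScompact : IsCompact (limSet X Y x) :=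
    (isCompact_closedBall (0 : Fin n → ℝ) C).of_isClosed_subset (limSet_isClosed X Y x) hsub
  refine ⟨?_, ?_, ?_, ?_⟩
  · exact hne.mono (subset_convexHull ℝ _)
  · exact isCompact_convexHull_of_isCompact hScompact
  · exact convex_convexHull ℝ _
  · rw [setLieBracket_eq, setLieBracket_eq, limSet_swap, convexHull_neg]
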